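/- Let r ≥ 0 be an integer. For every 2×(r+1) real matrix F̂ and every x ∈ [−1, 0], |P_r(F̂)(x)| ≤ 2 C(2r+2, r) ‖F̂‖_max. In particular, sup_{x ∈ [−1,0]} |P_r(F̂)(x)| ≤ 2 C(2r+2, r) ‖F̂‖_max. -/

import Mathlib

open Real Set

noncomputable section

/-- The Hermite basis polynomial
`P_m^0(x) = (1/m!) x^m (1+x)^{r+1} ∑_{n=0}^{r-m} (-x)^n C(r+n, n)`. -/
def P0 (r m : ℕ) (x : ℝ) : ℝ :=
  (1 / (Nat.factorial m) : ℝ) * x ^ m * (1 + x) ^ (r + 1) *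
    ∑ n ∈ Finset.range (r - m + 1), (-x) ^ n * (Nat.choose (r + n) n : ℝ)

/-- The Hermite basis polynomial
`P_m^1(x) = (1/m!) (1+x)^m (-x)^{r+1} ∑_{n=0}^{r-m} (1+x)^n C(r+n, n)`. -/
def P1 (r m : ℕ) (x : ℝ) : ℝ :=
  (1 / (Nat.factorial m) : ℝ) * (1 + x) ^ m * (-x) ^ (r + 1) *
    ∑ n ∈ Finset.range (r - m + 1), (1 + x) ^ n * (Nat.choose (r + n) n : ℝ)

/-- The two-point Hermite interpolation polynomial `P_r(F̂)` of a boundary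
data matrix `F̂`. -/
def Pmat (r : ℕ) (A : Fin 2 → Fin (r + 1) → ℝ) (x : ℝ) : ℝ :=
  ∑ m : Fin (r + 1), A 0 m * P0 r (m : ℕ) x + ∑ m : Fin (r + 1), A 1 m * P1 r (m : ℕ) x

/-- The max-norm of a `2 × (r+1)` matrix. -/
def maxNorm {r : ℕ} (A : Fin 2 → Fin (r + 1) → ℝ) : ℝ :=
  Finset.univ.sup' Finset.univ_nonempty (fun p : Fin 2 × Fin (r + 1) => |A p.1 p.2|)

lemma sum_choose_hockey (r k : ℕ) :
    ∑ n ∈ Finset.range (k+1), (r+n).choose n = (r+k+1).choose k := by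
  induction k with
  | zero => simp
  | succ k ih =>
    rw [Finset.sum_range_succ, ih, show r + (k+1) = r+k+1 from by omega]
    exact (Nat.choose_succ_succ' (r+k+1) k).symm

lemma sum_reflect_choose (r : ℕ) :
    ∑ m ∈ Finset.range (r+1), (2*r+1-m).choose (r-m) = (2*r+2).choose r := by
  have h := Finset.sum_range_reflect (fun j => (r+1+j).choose j) (r+1)
  calc ∑ m ∈ Finset.range (r+1), (2*r+1-m).choose (r-m)
      = ∑ m ∈ Finset.range (r+1), (r+1+(r+1-1-m)).choose (r+1-1-m) := by
        refine Finset.sum_congr rfl fun m hm => ?_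
        have : m ≤ r := by simpa using Finset.mem_range_succ_iff.mp hm
        congr 1 <;> omega
    _ = ∑ j ∈ Finset.range (r+1), (r+1+j).choose j := h
    _ = (2*r+2).choose r := by rw [sum_choose_hockey]; congr 1; omega

lemma P0_bound (r m : ℕ) (hm : m ≤ r) {x : ℝ} (hx : x ∈ Icc (-1:ℝ) 0) :
    |P0 r m x| ≤ ((2*r+1-m).choose (r-m) : ℝ) := by
  obtain ⟨h1, h2⟩ := hx
  have hx1 : |x| ≤ 1 := abs_le.mpr ⟨h1, h2.trans zero_le_one⟩
  have h1x : |1+x| ≤ 1 := abs_le.mpr ⟨by linarith, by linarith⟩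
  have hfac : |(1 / (Nat.factorial m) : ℝ)| ≤ 1 := by
    rw [abs_of_nonneg (by positivity)]
    rw [div_le_one (by positivity)]
    exact_mod_cast Nat.one_le_iff_ne_zero.mpr (Nat.factorial_ne_zero m)
  have hsum : |∑ n ∈ Finset.range (r-m+1), (-x) ^ n * ((r+n).choose n : ℝ)|
      ≤ ∑ n ∈ Finset.range (r-m+1), ((r+n).choose n : ℝ) := by
    refine (Finset.abs_sum_le_sum_abs _ _).trans (Finset.sum_le_sum fun n _ => ?_)
    rw [abs_mul, abs_pow, abs_neg, Nat.abs_cast]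
    exact mul_le_of_le_one_left (Nat.cast_nonneg _) (pow_le_one₀ (abs_nonneg _) hx1)
  have key : ((2*r+1-m).choose (r-m) : ℝ)
      = ∑ n ∈ Finset.range (r-m+1), ((r+n).choose n : ℝ) := by
    rw [← Nat.cast_sum, sum_choose_hockey]
    congr 2; omega
  rw [P0, key, abs_mul, abs_mul, abs_mul]
  calc |1 / (Nat.factorial m:ℝ)| * |x ^ m| * |(1+x)^(r+1)| * |_| ≤ 1 * 1 * 1 * _ := by
        gcongr
        · rw [abs_pow]; exact pow_le_one₀ (abs_nonneg _) hx1
        · rw [abs_pow]; exact pow_le_one₀ (abs_nonneg _) h1x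
    _ ≤ _ := by rw [one_mul, one_mul, one_mul]; exact hsum

lemma P1_bound (r m : ℕ) (hm : m ≤ r) {x : ℝ} (hx : x ∈ Icc (-1:ℝ) 0) :
    |P1 r m x| ≤ ((2*r+1-m).choose (r-m) : ℝ) := by
  obtain ⟨h1, h2⟩ := hx
  have hx1 : |(-x)| ≤ 1 := abs_le.mpr ⟨by linarith, by linarith⟩
  have h1x : |1+x| ≤ 1 := abs_le.mpr ⟨by linarith, by linarith⟩
  have hfac : |(1 / (Nat.factorial m) : ℝ)| ≤ 1 := by
    rw [abs_of_nonneg (by positivity)]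
    rw [div_le_one (by positivity)]
    exact_mod_cast Nat.one_le_iff_ne_zero.mpr (Nat.factorial_ne_zero m)
  have hsum : |∑ n ∈ Finset.range (r-m+1), (1+x) ^ n * ((r+n).choose n : ℝ)|
      ≤ ∑ n ∈ Finset.range (r-m+1), ((r+n).choose n : ℝ) := by
    refine (Finset.abs_sum_le_sum_abs _ _).trans (Finset.sum_le_sum fun n _ => ?_)
    rw [abs_mul, abs_pow, Nat.abs_cast]
    exact mul_le_of_le_one_left (Nat.cast_nonneg _) (pow_le_one₀ (abs_nonneg _) h1x)
  have key : ((2*r+1-m).choose (r-m) : ℝ)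
      = ∑ n ∈ Finset.range (r-m+1), ((r+n).choose n : ℝ) := by
    rw [← Nat.cast_sum, sum_choose_hockey]
    congr 2; omega
  rw [P1, key, abs_mul, abs_mul, abs_mul]
  calc |1 / (Nat.factorial m:ℝ)| * |(1+x) ^ m| * |(-x)^(r+1)| * |_| ≤ 1 * 1 * 1 * _ := by
        gcongr
        · rw [abs_pow]; exact pow_le_one₀ (abs_nonneg _) h1x
        · rw [abs_pow]; exact pow_le_one₀ (abs_nonneg _) hx1
    _ ≤ _ := by rw [one_mul, one_mul, one_mul]; exact hsum

/-- Boundedness of the Hermite continuation operator: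
`|P_r(F̂)(x)| ≤ 2 C(2r+2, r) ‖F̂‖_max` for all `x ∈ [-1, 0]`, and hence the same
bound holds for the supremum over `[-1,0]`. -/
theorem hermite_operator_bound (r : ℕ) (Fh : Fin 2 → Fin (r + 1) → ℝ) :
    (∀ x ∈ Icc (-1 : ℝ) 0,
      |Pmat r Fh x| ≤ 2 * (Nat.choose (2 * r + 2) r : ℝ) * maxNorm Fh) ∧
    ⨆ x ∈ Icc (-1 : ℝ) 0, |Pmat r Fh x|
      ≤ 2 * (Nat.choose (2 * r + 2) r : ℝ) * maxNorm Fh := by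
  have hA : ∀ (j : Fin 2) (m : Fin (r+1)), |Fh j m| ≤ maxNorm Fh := fun j m =>
    Finset.le_sup' (fun p : Fin 2 × Fin (r + 1) => |Fh p.1 p.2|) (Finset.mem_univ (j, m))
  have hN : 0 ≤ maxNorm Fh := (abs_nonneg _).trans (hA 0 0)
  have hB : 0 ≤ 2 * ((2*r+2).choose r : ℝ) * maxNorm Fh :=
    mul_nonneg (mul_nonneg (by norm_num) (Nat.cast_nonneg _)) hN
  have S : ∑ m : Fin (r+1), ((2*r+1-(m:ℕ)).choose (r-(m:ℕ)) : ℝ)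
      = ((2*r+2).choose r : ℝ) := by
    rw [← Nat.cast_sum,
      Fin.sum_univ_eq_sum_range (fun m => (2*r+1-m).choose (r-m)) (r+1),
      sum_reflect_choose]
  have key : ∀ x ∈ Icc (-1 : ℝ) 0,
      |Pmat r Fh x| ≤ 2 * ((2*r+2).choose r : ℝ) * maxNorm Fh := by
    intro x hx
    have h0 : ∀ (j : Fin 2) (g : ℕ → ℝ → ℝ)
        (hg : ∀ m : Fin (r+1), |g (m:ℕ) x| ≤ ((2*r+1-(m:ℕ)).choose (r-(m:ℕ)) : ℝ)),
        |∑ m : Fin (r+1), Fh j m * g (m:ℕ) x|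
          ≤ maxNorm Fh * ((2*r+2).choose r : ℝ) := by
      intro j g hg
      calc |∑ m : Fin (r+1), Fh j m * g (m:ℕ) x|
          ≤ ∑ m : Fin (r+1), |Fh j m * g (m:ℕ) x| := Finset.abs_sum_le_sum_abs _ _
        _ ≤ ∑ m : Fin (r+1), maxNorm Fh * ((2*r+1-(m:ℕ)).choose (r-(m:ℕ)) : ℝ) := by
            refine Finset.sum_le_sum fun m _ => ?_
            rw [abs_mul]
            exact mul_le_mul (hA j m) (hg m) (abs_nonneg _) hN
        _ = maxNorm Fh * ((2*r+2).choose r : ℝ) := by rw [← Finset.mul_sum, S]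
    calc |Pmat r Fh x|
        ≤ |∑ m : Fin (r+1), Fh 0 m * P0 r (m:ℕ) x|
          + |∑ m : Fin (r+1), Fh 1 m * P1 r (m:ℕ) x| := abs_add_le _ _
      _ ≤ maxNorm Fh * ((2*r+2).choose r : ℝ)
          + maxNorm Fh * ((2*r+2).choose r : ℝ) := by
          refine add_le_add (h0 0 (fun m y => P0 r m y) ?_) (h0 1 (fun m y => P1 r m y) ?_)
          · exact fun m => P0_bound r m (Fin.is_le m) hx
          · exact fun m => P1_bound r m (Fin.is_le m) hx
      _ = 2 * ((2*r+2).choose r : ℝ) * maxNorm Fh := by ring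
  exact ⟨key, Real.iSup_le (fun x => Real.iSup_le (fun hx => key x hx) hB) hB⟩

end
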